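/- If $G$ is a cograph on $n$ vertices and $\lambda \neq 0$ is a real number, then there exists a real symmetric $n \times n$ matrix $M$ whose off-diagonal entry $m_{ij}$ is nonzero if and only if $\{i,j\}$ is an edge of $G$, such that every eigenvalue of $M$ lies in the set $\{-\lambda, 0, \lambda, 2\lambda\}$ and every diagonal entry of $M$ lies in $\{0, \lambda\}$. -/

import Mathlib

open SimpleGraph Matrix

noncomputable section CographProof

variable {V : Type*}

lemma mkP4 {G : SimpleGraph V} {a b c d : V} (hab : G.Adj a b) (hbc : G.Adj b c)
    (hcd : G.Adj c d) (hac : ¬G.Adj a c) (had : ¬G.Adj a d) (hbd : ¬G.Adj b d) :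
    Nonempty (pathGraph 4 ↪g G) := by
  have hab' : a ≠ b := G.ne_of_adj hab
  have hbc' : b ≠ c := G.ne_of_adj hbc
  have hcd' : c ≠ d := G.ne_of_adj hcd
  have hac' : a ≠ c := by rintro rfl; exact had hcd
  have had' : a ≠ d := by rintro rfl; exact hac hcd.symm
  have hbd' : b ≠ d := by rintro rfl; exact had hab
  have hca : ¬G.Adj c a := fun h => hac h.symm
  have hda : ¬G.Adj d a := fun h => had h.symm
  have hdb : ¬G.Adj d b := fun h => hbd h.symm
  refine ⟨⟨⟨![a,b,c,d], ?_⟩, ?_⟩⟩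
  · intro i j hij
    fin_cases i <;> fin_cases j <;> simp_all <;> (exfalso; simp_all)
  · intro i j
    change G.Adj (![a,b,c,d] i) (![a,b,c,d] j) ↔ (pathGraph 4).Adj i j
    fin_cases i <;> fin_cases j <;>
      simp +decide [Function.Embedding.coeFn_mk, pathGraph_adj, hab, hbc, hcd, hac, had, hbd, hab.symm, hbc.symm, hcd.symm,
        hca, hda, hdb, G.irrefl]

lemma first_step {G : SimpleGraph V} {v x : V} (h : v ≠ x) (w : G.Walk v x) :
    ∃ y, G.Adj v y := by
  cases w with
  | nil => exact absurd rfl h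
  | cons h' _ => exact ⟨_, h'⟩

-- walk in Gᶜ from x to v gives a vertex y ≠ v, Gᶜ-adjacent to v,
-- reachable from x inside the induced graph on {z | z ≠ v}
lemma reach_to_nbr {G : SimpleGraph V} {v : V} :
    ∀ {x : V} (w : Gᶜ.Walk x v) (hx : x ≠ v),
    ∃ (y : V) (hy : y ≠ v), Gᶜ.Adj y v ∧
      (Gᶜ.induce {z | z ≠ v}).Reachable ⟨x, hx⟩ ⟨y, hy⟩ := by
  intro x w
  induction w with
  | nil => exact fun hx => absurd rfl hx
  | @cons x x' v h p ih =>
    intro hx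
    by_cases hx' : x' = v
    · subst hx'
      exact ⟨x, hx, h, Reachable.refl _⟩
    · obtain ⟨y, hy, hadj, hr⟩ := ih hx'
      have : (Gᶜ.induce {z | z ≠ v}).Adj ⟨x, hx⟩ ⟨x', hx'⟩ := by
        simp [comap_adj, h]
      exact ⟨y, hy, hadj, this.reachable.trans hr⟩

lemma switch_pair {G : SimpleGraph V} {v : V} :
    ∀ {s t : {z : V // z ≠ v}} (w : (Gᶜ.induce {z | z ≠ v}).Walk s t),
    G.Adj v s.val → ¬G.Adj v t.val →
    ∃ p q : {z : V // z ≠ v}, (Gᶜ.induce {z | z ≠ v}).Adj p q ∧ G.Adj v p.val ∧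
      ¬G.Adj v q.val ∧ (Gᶜ.induce {z | z ≠ v}).Reachable s p ∧
      (Gᶜ.induce {z | z ≠ v}).Reachable s q := by
  intro s t w
  induction w with
  | nil => exact fun h1 h2 => absurd h1 h2
  | @cons s s' t h p ih =>
    intro hs ht
    by_cases hs' : G.Adj v s'.val
    · obtain ⟨p', q', h1, h2, h3, h4, h5⟩ := ih hs' ht
      exact ⟨p', q', h1, h2, h3, h.reachable.trans h4, h.reachable.trans h5⟩
    · exact ⟨s, s', h, hs, hs', Reachable.refl _, h.reachable⟩

lemma cop4 [Fintype V] {v : V} (G : SimpleGraph V) (h2 : 2 ≤ Fintype.card V)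
    (hG : G.Connected) (hGc : Gᶜ.Connected)
    (hH : ¬ (Gᶜ.induce {z | z ≠ v}).Connected) :
    ∃ a b c d, G.Adj a b ∧ G.Adj b c ∧ G.Adj c d ∧ ¬G.Adj a c ∧ ¬G.Adj a d ∧ ¬G.Adj b d := by
  classical
  set H := Gᶜ.induce {z | z ≠ v} with hHdef
  -- V' nonempty
  obtain ⟨x0, hx0⟩ := Fintype.exists_ne_of_one_lt_card (by omega) v
  haveI hne : Nonempty ↑{z : V | z ≠ v} := ⟨⟨x0, hx0⟩⟩
  -- not preconnected
  have hpre : ¬ H.Preconnected := fun h => hH ⟨h⟩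
  rw [SimpleGraph.Preconnected] at hpre
  push_neg at hpre
  obtain ⟨p, q, hpq⟩ := hpre
  -- v has a G-neighbor
  have hb : ∃ y, G.Adj v y := first_step hx0.symm (hG.preconnected v x0).some
  obtain ⟨b0, hb0⟩ := hb
  have hb0v : b0 ≠ v := fun h => G.irrefl (h ▸ hb0)
  set b : {z : V // z ≠ v} := ⟨b0, hb0v⟩ with hbdef
  -- every vertex of V' can H-reach a Gᶜ-neighbor of v
  have nbrInComp : ∀ s : {z : V // z ≠ v}, ∃ (y : V) (hy : y ≠ v), Gᶜ.Adj y v ∧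
      H.Reachable s ⟨y, hy⟩ := fun s =>
    reach_to_nbr (hGc.preconnected s.val v).some s.prop
  -- choose z among p q not reachable from b
  have hz : ∃ z, ¬ H.Reachable b z := by
    by_cases h : H.Reachable b p
    · exact ⟨q, fun h' => hpq (h.symm.trans h')⟩
    · exact ⟨p, h⟩
  obtain ⟨z, hbz⟩ := hz
  obtain ⟨a2, ha2v, ha2adj, ha2r⟩ := nbrInComp z
  have ha2G : ¬G.Adj v a2 := fun h => (Gᶜ.adj_symm ha2adj).2 h
  have hba2 : ¬ H.Reachable b ⟨a2, ha2v⟩ := fun h => hbz (h.trans ha2r.symm)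
  obtain ⟨yb, hybv, hybadj, hybr⟩ := nbrInComp b
  have hybG : ¬G.Adj v yb := fun h => (Gᶜ.adj_symm hybadj).2 h
  obtain ⟨u, w, huw, hu, hw, hru, hrw⟩ := switch_pair hybr.some hb0 hybG
  -- cross adjacencies
  have key : ∀ (s : {z : V // z ≠ v}), H.Reachable b s → G.Adj s.val a2 := by
    intro s hs
    have hne' : ¬ H.Reachable s ⟨a2, ha2v⟩ := fun h => hba2 (hs.trans h)
    have hnadj : ¬ H.Adj s ⟨a2, ha2v⟩ := fun h => hne' h.reachable
    have hsa : s.val ≠ a2 := by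
      intro h
      have heq : s = ⟨a2, ha2v⟩ := Subtype.ext h
      exact hne' (heq ▸ Reachable.refl s)
    rw [hHdef] at hnadj
    simp only [comap_adj, Function.Embedding.coe_subtype, compl_adj] at hnadj
    push_neg at hnadj
    exact hnadj hsa
  have hua2 : G.Adj u.val a2 := key u hru
  have hwa2 : G.Adj w.val a2 := key w hrw
  have huwG : ¬ G.Adj u.val w.val := by
    have h' := huw
    simp only [hHdef, comap_adj, Function.Embedding.coe_subtype, compl_adj] at h'
    exact h'.2
  exact ⟨v, u.val, a2, w.val, hu, hua2, hwa2.symm, ha2G, hw, huwG⟩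

lemma induce_compl (G : SimpleGraph V) (s : Set V) : (G.induce s)ᶜ = Gᶜ.induce s := by
  ext a b
  simp only [compl_adj, comap_adj, Function.Embedding.coe_subtype, ne_eq]
  simp [Subtype.ext_iff]

lemma bothConn : ∀ (n : ℕ) {V : Type} [Fintype V] (G : SimpleGraph V),
    Fintype.card V = n → 2 ≤ n → G.Connected → Gᶜ.Connected →
    Nonempty (pathGraph 4 ↪g G) := by
  intro n
  induction n using Nat.strong_induction_on with
  | _ n ih =>
    intro V _ G hcard h2 hG hGc
    classical
    rcases Nat.lt_or_ge n 3 with h3 | h3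
    · -- n = 2 : contradiction
      exfalso
      have h2' : (2:ℕ) = n := by omega
      obtain ⟨x, y, hxy⟩ := Fintype.exists_pair_of_one_lt_card (by omega : 1 < Fintype.card V)
      have huniv : ∀ a : V, a = x ∨ a = y := by
        intro a
        have : ({x, y} : Finset V) = Finset.univ := by
          apply Finset.eq_univ_of_card
          rw [Finset.card_pair hxy, hcard, ← h2']
        have ha : a ∈ ({x, y} : Finset V) := this ▸ Finset.mem_univ a
        simpa using ha
      have hadj : ∀ (G' : SimpleGraph V), G'.Connected → G'.Adj x y := by
        intro G' hG'
        have hstep : ∃ z, G'.Adj x z := by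
          cases (hG'.preconnected x y).some with
          | nil => exact absurd rfl hxy
          | cons h' _ => exact ⟨_, h'⟩
        obtain ⟨z, hz⟩ := hstep
        have hzx : z ≠ x := fun h => G'.irrefl (h ▸ hz)
        rcases huniv z with rfl | rfl
        · exact absurd rfl hzx
        · exact hz
      exact (hadj Gᶜ hGc).2 (hadj G hG)
    · -- n ≥ 3
      obtain ⟨v⟩ : Nonempty V := Fintype.card_pos_iff.mp (by omega)
      set s : Set V := {z | z ≠ v} with hs
      have hcard' : Fintype.card ↑s = n - 1 := by
        have h := Fintype.card_subtype_compl (fun z : V => z = v)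
        rw [Fintype.card_subtype_eq, hcard] at h
        calc Fintype.card ↑s = Fintype.card {z : V // ¬ z = v} :=
              Fintype.card_congr (Equiv.refl _)
          _ = n - 1 := h
      by_cases hc1 : (G.induce s).Connected
      · by_cases hc2 : (Gᶜ.induce s).Connected
        · -- both connected, use IH
          have hcompl : (G.induce s)ᶜ.Connected := by rw [induce_compl]; exact hc2
          obtain ⟨f⟩ := ih (n-1) (by omega) (G.induce s) hcard' (by omega) hc1 hcompl
          exact ⟨(SimpleGraph.Embedding.induce s).comp f⟩
        · obtain ⟨a, b, c, d, h1, h2', h3', h4, h5, h6⟩ := cop4 (v := v) G (by omega) hG hGc hc2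
          exact mkP4 h1 h2' h3' h4 h5 h6
      · -- G.induce s not connected : apply cop4 to Gᶜ
        have hc1' : ¬ ((Gᶜ)ᶜ.induce s).Connected := by rwa [compl_compl]
        obtain ⟨a, b, c, d, h1, h2', h3', h4, h5, h6⟩ :=
          cop4 (v := v) Gᶜ (by omega) hGc (by rwa [compl_compl]) hc1'
        -- h's are in Gᶜ; convert to G pattern : path b-d-a-c in G
        have hab' : a ≠ b := Gᶜ.ne_of_adj h1
        have hbc' : b ≠ c := Gᶜ.ne_of_adj h2'
        have hcd' : c ≠ d := Gᶜ.ne_of_adj h3'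
        have hac' : a ≠ c := by rintro rfl; exact h5 h3'
        have had' : a ≠ d := by rintro rfl; exact h4 h3'.symm
        have hbd' : b ≠ d := by rintro rfl; exact h5 h1
        have gac : G.Adj a c := by
          by_contra h; exact h4 ((compl_adj G a c).mpr ⟨hac', h⟩)
        have gad : G.Adj a d := by
          by_contra h; exact h5 ((compl_adj G a d).mpr ⟨had', h⟩)
        have gbd : G.Adj b d := by
          by_contra h; exact h6 ((compl_adj G b d).mpr ⟨hbd', h⟩)
        have nab : ¬ G.Adj a b := fun h => (h1.2) h
        have nbc : ¬ G.Adj b c := fun h => (h2'.2) h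
        have ncd : ¬ G.Adj c d := fun h => (h3'.2) h
        -- path  b - d - a - c
        exact mkP4 gbd gad.symm gac (fun h => nab h.symm) nbc (fun h => ncd h.symm)

lemma decomp {V : Type} [Fintype V] (G : SimpleGraph V) (h2 : 2 ≤ Fintype.card V)
    (hfree : IsEmpty (pathGraph 4 ↪g G)) :
    ∃ A : Set V, A.Nonempty ∧ Aᶜ.Nonempty ∧
      ((∀ a ∈ A, ∀ b ∈ Aᶜ, ¬G.Adj a b) ∨ (∀ a ∈ A, ∀ b ∈ Aᶜ, G.Adj a b)) := by
  classical
  haveI : Nonempty V := Fintype.card_pos_iff.mp (by omega)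
  have hnc : ¬ (G.Connected ∧ Gᶜ.Connected) := by
    rintro ⟨h1', h2'⟩
    obtain ⟨f⟩ := bothConn (Fintype.card V) G rfl h2 h1' h2'
    exact hfree.elim f
  have split : ∀ (G' : SimpleGraph V), ¬ G'.Connected →
      ∃ A : Set V, A.Nonempty ∧ Aᶜ.Nonempty ∧ (∀ a ∈ A, ∀ b ∈ Aᶜ, ¬G'.Adj a b) := by
    intro G' hG'
    have hpre : ¬ G'.Preconnected := fun h => hG' ⟨h⟩
    rw [SimpleGraph.Preconnected] at hpre
    push_neg at hpre
    obtain ⟨x, y, hxy⟩ := hpre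
    refine ⟨{z | G'.Reachable x z}, ⟨x, Reachable.refl x⟩, ⟨y, hxy⟩, ?_⟩
    intro a ha b hb hadj
    exact hb (ha.trans hadj.reachable)
  by_cases hc : G.Connected
  · have hcc : ¬ Gᶜ.Connected := fun h => hnc ⟨hc, h⟩
    obtain ⟨A, h1', h2', h3'⟩ := split Gᶜ hcc
    refine ⟨A, h1', h2', Or.inr ?_⟩
    intro a ha b hb
    have hne : a ≠ b := fun h => hb (h ▸ ha)
    by_contra h
    exact h3' a ha b hb ((compl_adj G a b).mpr ⟨hne, h⟩)
  · obtain ⟨A, h1', h2', h3'⟩ := split G hc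
    exact ⟨A, h1', h2', Or.inl h3'⟩

section LinAlg
variable {V1 V2 : Type} [Fintype V1] [Fintype V2]

def sumG {V1 V2 : Type} (G1 : SimpleGraph V1) (G2 : SimpleGraph V2) (c : Prop) :
    SimpleGraph (V1 ⊕ V2) where
  Adj x y := match x, y with
    | .inl a, .inl b => G1.Adj a b
    | .inr a, .inr b => G2.Adj a b
    | _, _ => c
  symm := ⟨by rintro (a|a) (b|b) h <;> first | exact h.symm | exact h⟩
  loopless := ⟨by rintro (a|a) h <;> exact SimpleGraph.irrefl _ h⟩

@[simp] lemma sumG_adj_ll {V1 V2 : Type} (G1 : SimpleGraph V1) (G2 : SimpleGraph V2) (c : Prop)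
    (a b : V1) : (sumG G1 G2 c).Adj (.inl a) (.inl b) ↔ G1.Adj a b := Iff.rfl
@[simp] lemma sumG_adj_rr {V1 V2 : Type} (G1 : SimpleGraph V1) (G2 : SimpleGraph V2) (c : Prop)
    (a b : V2) : (sumG G1 G2 c).Adj (.inr a) (.inr b) ↔ G2.Adj a b := Iff.rfl
@[simp] lemma sumG_adj_lr {V1 V2 : Type} (G1 : SimpleGraph V1) (G2 : SimpleGraph V2) (c : Prop)
    (a : V1) (b : V2) : (sumG G1 G2 c).Adj (.inl a) (.inr b) ↔ c := Iff.rfl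
@[simp] lemma sumG_adj_rl {V1 V2 : Type} (G1 : SimpleGraph V1) (G2 : SimpleGraph V2) (c : Prop)
    (a : V2) (b : V1) : (sumG G1 G2 c).Adj (.inr a) (.inl b) ↔ c := Iff.rfl

/-- The invariant we carry through the cotree induction. -/
def CInv (l : ℝ) {V : Type} [Fintype V] (G : SimpleGraph V) (μ : ℝ) : Prop :=
  ∃ (M : Matrix V V ℝ) (u : V → ℝ), M.IsSymm ∧
    (∀ i j, i ≠ j → (M i j ≠ 0 ↔ G.Adj i j)) ∧
    (∀ i, M i i ∈ ({0, l} : Set ℝ)) ∧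
    (∀ (μ' : ℝ) (v : V → ℝ), v ≠ 0 → M *ᵥ v = μ' • v → μ' ∈ ({-l, 0, l, 2*l} : Set ℝ)) ∧
    M *ᵥ u = μ • u ∧ (∀ i, u i ≠ 0) ∧ (∑ i, u i * u i) = 1

def bmat (M1 : Matrix V1 V1 ℝ) (M2 : Matrix V2 V2 ℝ) (C : V1 → V2 → ℝ) :
    Matrix (V1 ⊕ V2) (V1 ⊕ V2) ℝ :=
  fun x y => match x, y with
  | .inl a, .inl b => M1 a b
  | .inr a, .inr b => M2 a b
  | .inl a, .inr b => C a b
  | .inr a, .inl b => C b a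

lemma bmat_mulVec_inl (M1 : Matrix V1 V1 ℝ) (M2 : Matrix V2 V2 ℝ) (C : V1 → V2 → ℝ)
    (v : V1 ⊕ V2 → ℝ) (a : V1) :
    (bmat M1 M2 C *ᵥ v) (.inl a) = (M1 *ᵥ (v ∘ .inl)) a + ∑ b, C a b * v (.inr b) := by
  simp [Matrix.mulVec, dotProduct, Fintype.sum_sum_type, bmat, Function.comp]

lemma bmat_mulVec_inr (M1 : Matrix V1 V1 ℝ) (M2 : Matrix V2 V2 ℝ) (C : V1 → V2 → ℝ)
    (v : V1 ⊕ V2 → ℝ) (b : V2) :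
    (bmat M1 M2 C *ᵥ v) (.inr b) = (∑ a, C a b * v (.inl a)) + (M2 *ᵥ (v ∘ .inr)) b := by
  simp [Matrix.mulVec, dotProduct, Fintype.sum_sum_type, bmat, Function.comp]

lemma bmat_isSymm {M1 : Matrix V1 V1 ℝ} {M2 : Matrix V2 V2 ℝ} {C : V1 → V2 → ℝ}
    (h1 : M1.IsSymm) (h2 : M2.IsSymm) : (bmat M1 M2 C).IsSymm := by
  apply Matrix.IsSymm.ext
  rintro (a|a) (b|b)
  · exact h1.apply a b
  · rfl
  · rfl
  · exact h2.apply a b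

lemma sqrt2_ne : (Real.sqrt 2)⁻¹ ≠ 0 := by positivity

lemma sqrt2_sq : (Real.sqrt 2)⁻¹ * (Real.sqrt 2)⁻¹ = 1/2 := by
  rw [← mul_inv]
  rw [Real.mul_self_sqrt (by norm_num)]
  norm_num

lemma bmat_app_ll (M1 : Matrix V1 V1 ℝ) (M2 : Matrix V2 V2 ℝ) (C : V1 → V2 → ℝ) (a b : V1) :
    bmat M1 M2 C (.inl a) (.inl b) = M1 a b := rfl
lemma bmat_app_rr (M1 : Matrix V1 V1 ℝ) (M2 : Matrix V2 V2 ℝ) (C : V1 → V2 → ℝ) (a b : V2) :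
    bmat M1 M2 C (.inr a) (.inr b) = M2 a b := rfl
lemma bmat_app_lr (M1 : Matrix V1 V1 ℝ) (M2 : Matrix V2 V2 ℝ) (C : V1 → V2 → ℝ) (a : V1) (b : V2) :
    bmat M1 M2 C (.inl a) (.inr b) = C a b := rfl
lemma bmat_app_rl (M1 : Matrix V1 V1 ℝ) (M2 : Matrix V2 V2 ℝ) (C : V1 → V2 → ℝ) (a : V2) (b : V1) :
    bmat M1 M2 C (.inr a) (.inl b) = C b a := rfl

lemma inv_base {l : ℝ} {V : Type} [Fintype V] (G : SimpleGraph V)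
    (h1 : Fintype.card V = 1) : CInv l G 0 ∧ CInv l G l := by
  classical
  have hsub : ∀ i j : V, i = j := fun i j => by
    haveI := Fintype.card_le_one_iff.mp (le_of_eq h1)
    exact this i j
  have hsum : (∑ _i : V, (1:ℝ) * 1) = 1 := by
    simp [Finset.card_univ, h1]
  constructor
  · refine ⟨0, fun _ => 1, Matrix.isSymm_zero, ?_, ?_, ?_, ?_, fun _ => one_ne_zero, hsum⟩
    · intro i j hij; exact absurd (hsub i j) hij
    · intro i; simp
    · intro μ' v hv hMv
      obtain ⟨i, hi⟩ := Function.ne_iff.mp hv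
      have : (0:ℝ) = μ' * v i := congrFun (by simpa using hMv) i
      have : μ' = 0 := by
        rcases mul_eq_zero.mp this.symm with h | h
        · exact h
        · exact absurd h (by simpa using hi)
      simp [this]
    · simp
  · refine ⟨l • 1, fun _ => 1, ?_, ?_, ?_, ?_, ?_, fun _ => one_ne_zero, hsum⟩
    · rw [Matrix.IsSymm, Matrix.transpose_smul, Matrix.transpose_one]
    · intro i j hij; exact absurd (hsub i j) hij
    · intro i; simp [Matrix.smul_apply, Matrix.one_apply]
    · intro μ' v hv hMv
      obtain ⟨i, hi⟩ := Function.ne_iff.mp hv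
      have h' : l • v = μ' • v := by
        rw [← hMv, Matrix.smul_mulVec, Matrix.one_mulVec]
      have : l * v i = μ' * v i := congrFun h' i
      have : μ' = l := by
        have hvi : v i ≠ 0 := by simpa using hi
        exact (mul_right_cancel₀ hvi this).symm
      simp [this]
    · rw [Matrix.smul_mulVec, Matrix.one_mulVec]

lemma inv_union {l μ : ℝ} {G1 : SimpleGraph V1} {G2 : SimpleGraph V2}
    (h1 : CInv l G1 μ) (h2 : CInv l G2 μ) : CInv l (sumG G1 G2 False) μ := by
  obtain ⟨M1, u1, hs1, hp1, hd1, he1, hu1, hz1, hn1⟩ := h1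
  obtain ⟨M2, u2, hs2, hp2, hd2, he2, hu2, hz2, hn2⟩ := h2
  set r : ℝ := (Real.sqrt 2)⁻¹
  refine ⟨bmat M1 M2 (fun _ _ => 0), Sum.elim (fun a => r * u1 a) (fun b => r * u2 b),
    ?_, ?_, ?_, ?_, ?_, ?_, ?_⟩
  · exact bmat_isSymm hs1 hs2
  · rintro (a|a) (b|b) hij
    · simpa [bmat, sumG_adj_ll] using hp1 a b (fun h => hij (by rw [h]))
    · simp [bmat, sumG_adj_lr]
    · simp [bmat, sumG_adj_rl]
    · simpa [bmat, sumG_adj_rr] using hp2 a b (fun h => hij (by rw [h]))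
  · rintro (a|a)
    · exact hd1 a
    · exact hd2 a
  · -- eigenvalue condition
    intro μ' v hv hMv
    by_cases hv1 : (v ∘ Sum.inl) = 0
    · have hv2 : (v ∘ Sum.inr) ≠ 0 := by
        intro h
        apply hv
        funext x
        cases x with
        | inl a => exact congrFun hv1 a
        | inr b => exact congrFun h b
      apply he2 μ' _ hv2
      funext b
      have := congrFun hMv (Sum.inr b)
      rw [bmat_mulVec_inr] at this
      simpa using this
    · apply he1 μ' _ hv1
      funext a
      have := congrFun hMv (Sum.inl a)
      rw [bmat_mulVec_inl] at this
      simpa using this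
  · funext x
    cases x with
    | inl a =>
      rw [bmat_mulVec_inl]
      have : ((Sum.elim (fun a => r * u1 a) fun b => r * u2 b) ∘ Sum.inl) = r • u1 := by
        funext a; simp [Function.comp]
      rw [this]
      simp [Matrix.mulVec_smul, hu1, mul_comm, mul_left_comm]
      ring
    | inr b =>
      rw [bmat_mulVec_inr]
      have : ((Sum.elim (fun a => r * u1 a) fun b => r * u2 b) ∘ Sum.inr) = r • u2 := by
        funext a; simp [Function.comp]
      rw [this]
      simp [Matrix.mulVec_smul, hu2, mul_comm, mul_left_comm]
      ring
  · rintro (a|a)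
    · exact mul_ne_zero sqrt2_ne (hz1 a)
    · exact mul_ne_zero sqrt2_ne (hz2 a)
  · rw [Fintype.sum_sum_type]
    have e1 : ∀ a, (r * u1 a) * (r * u1 a) = (r*r) * (u1 a * u1 a) := fun a => by ring
    have e2 : ∀ b, (r * u2 b) * (r * u2 b) = (r*r) * (u2 b * u2 b) := fun b => by ring
    simp only [Sum.elim_inl, Sum.elim_inr, e1, e2, ← Finset.mul_sum, hn1, hn2]
    have hr : r * r = 1/2 := sqrt2_sq
    rw [hr]
    norm_num

lemma dot_eig {n : Type} [Fintype n] {M : Matrix n n ℝ} {u v : n → ℝ} {μ0 : ℝ}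
    (hs : M.IsSymm) (hu : M *ᵥ u = μ0 • u) : u ⬝ᵥ (M *ᵥ v) = μ0 * (u ⬝ᵥ v) := by
  have h : u ᵥ* M = μ0 • u := by rw [← hs.eq, Matrix.vecMul_transpose, hu]
  rw [Matrix.dotProduct_mulVec, h, smul_dotProduct, smul_eq_mul]

lemma dot_step {n : Type} [Fintype n] {M : Matrix n n ℝ} {u w : n → ℝ} {μ0 c μ' : ℝ}
    (hs : M.IsSymm) (hu : M *ᵥ u = μ0 • u) (hn : (∑ i, u i * u i) = 1)
    (E : ∀ x, (M *ᵥ w) x + c * u x = μ' * w x) :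
    μ0 * (u ⬝ᵥ w) + c = μ' * (u ⬝ᵥ w) := by
  have L : ∑ x, u x * ((M *ᵥ w) x + c * u x) = μ0 * (u ⬝ᵥ w) + c := by
    have hdist : ∀ x, u x * ((M *ᵥ w) x + c * u x)
        = u x * (M *ᵥ w) x + c * (u x * u x) := fun x => by ring
    simp only [hdist, Finset.sum_add_distrib, ← Finset.mul_sum, hn, mul_one]
    congr 1
    exact dot_eig hs hu
  have R : ∑ x, u x * (μ' * w x) = μ' * (u ⬝ᵥ w) := by
    calc ∑ x, u x * (μ' * w x) = μ' * ∑ x, u x * w x := by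
          rw [Finset.mul_sum]; apply Finset.sum_congr rfl; intros; ring
      _ = μ' * (u ⬝ᵥ w) := rfl
  rw [← L, ← R]
  exact Finset.sum_congr rfl (fun x _ => by rw [E x])

lemma inv_join {l μ0 ε : ℝ} (hl : l ≠ 0) (hμ0 : μ0 = 0 ∨ μ0 = l) (hε : ε = 1 ∨ ε = -1)
    {G1 : SimpleGraph V1} {G2 : SimpleGraph V2}
    (h1 : CInv l G1 μ0) (h2 : CInv l G2 μ0) : CInv l (sumG G1 G2 True) (μ0 + ε * l) := by
  obtain ⟨M1, u1, hs1, hp1, hd1, he1, hu1, hz1, hn1⟩ := h1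
  obtain ⟨M2, u2, hs2, hp2, hd2, he2, hu2, hz2, hn2⟩ := h2
  set r : ℝ := (Real.sqrt 2)⁻¹ with hrdef
  have hε2 : ε * ε = 1 := by rcases hε with rfl | rfl <;> norm_num
  have hεne : ε ≠ 0 := by rcases hε with rfl | rfl <;> norm_num
  refine ⟨bmat M1 M2 (fun a b => l * u1 a * u2 b),
    Sum.elim (fun a => r * u1 a) (fun b => ε * r * u2 b), ?_, ?_, ?_, ?_, ?_, ?_, ?_⟩
  · exact bmat_isSymm hs1 hs2
  · rintro (a|a) (b|b) hij
    · simpa [bmat_app_ll, sumG_adj_ll] using hp1 a b (fun h => hij (by rw [h]))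
    · simp only [bmat_app_lr, sumG_adj_lr]
      exact ⟨fun _ => trivial, fun _ => mul_ne_zero (mul_ne_zero hl (hz1 a)) (hz2 b)⟩
    · simp only [bmat_app_rl, sumG_adj_rl]
      exact ⟨fun _ => trivial, fun _ => mul_ne_zero (mul_ne_zero hl (hz1 b)) (hz2 a)⟩
    · simpa [bmat_app_rr, sumG_adj_rr] using hp2 a b (fun h => hij (by rw [h]))
  · rintro (a|a)
    · rw [bmat_app_ll]; exact hd1 a
    · rw [bmat_app_rr]; exact hd2 a
  · -- eigenvalue condition
    intro μ' v hv hMv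
    set v1 : V1 → ℝ := v ∘ Sum.inl with hv1def
    set v2 : V2 → ℝ := v ∘ Sum.inr with hv2def
    set a : ℝ := u1 ⬝ᵥ v1 with hadef
    set b : ℝ := u2 ⬝ᵥ v2 with hbdef
    have hcross1 : ∀ x, ∑ y, (l * u1 x * u2 y) * v (Sum.inr y) = (l * b) * u1 x := by
      intro x
      calc ∑ y, (l * u1 x * u2 y) * v (Sum.inr y)
          = ∑ y, (l * u1 x) * (u2 y * v2 y) := by
            apply Finset.sum_congr rfl; intro y _
            show l * u1 x * u2 y * v (Sum.inr y) = l * u1 x * (u2 y * v (Sum.inr y))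
            ring
        _ = (l * u1 x) * (u2 ⬝ᵥ v2) := by rw [← Finset.mul_sum]; rfl
        _ = (l * b) * u1 x := by rw [← hbdef]; ring
    have hcross2 : ∀ y, ∑ x, (l * u1 x * u2 y) * v (Sum.inl x) = (l * a) * u2 y := by
      intro y
      calc ∑ x, (l * u1 x * u2 y) * v (Sum.inl x)
          = ∑ x, (l * u2 y) * (u1 x * v1 x) := by
            apply Finset.sum_congr rfl; intro x _
            show l * u1 x * u2 y * v (Sum.inl x) = l * u2 y * (u1 x * v (Sum.inl x))
            ring
        _ = (l * u2 y) * (u1 ⬝ᵥ v1) := by rw [← Finset.mul_sum]; rfl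
        _ = (l * a) * u2 y := by rw [← hadef]; ring
    have E1 : ∀ x, (M1 *ᵥ v1) x + (l * b) * u1 x = μ' * v1 x := by
      intro x
      have h' := congrFun hMv (Sum.inl x)
      rw [bmat_mulVec_inl, hcross1 x] at h'
      simpa [hv1def] using h'
    have E2 : ∀ y, (M2 *ᵥ v2) y + (l * a) * u2 y = μ' * v2 y := by
      intro y
      have h' := congrFun hMv (Sum.inr y)
      rw [bmat_mulVec_inr, hcross2 y] at h'
      rw [add_comm] at h'
      simpa [hv2def] using h'
    have D1 : μ0 * a + l * b = μ' * a := dot_step hs1 hu1 hn1 E1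
    have D2 : μ0 * b + l * a = μ' * b := dot_step hs2 hu2 hn2 E2
    by_cases hab : a = 0 ∧ b = 0
    · obtain ⟨ha0, hb0⟩ := hab
      rw [ha0] at E2
      rw [hb0] at E1
      by_cases hv1z : v1 = 0
      · have hv2z : v2 ≠ 0 := by
          intro h'
          apply hv
          funext x
          cases x with
          | inl c => exact congrFun hv1z c
          | inr c => exact congrFun h' c
        apply he2 μ' v2 hv2z
        funext y
        have := E2 y
        simpa using this
      · apply he1 μ' v1 hv1z
        funext x
        have := E1 x
        simpa using this
    · have hor : a ≠ 0 ∨ b ≠ 0 := by tauto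
      set t : ℝ := μ' - μ0 with htdef
      have T1 : t * a = l * b := by rw [htdef]; linarith [D1]
      have T2 : t * b = l * a := by rw [htdef]; linarith [D2]
      have hsq : t * t = l * l := by
        rcases hor with ha | hb
        · refine mul_right_cancel₀ ha ?_
          calc (t*t)*a = t*(t*a) := by ring
            _ = t*(l*b) := by rw [T1]
            _ = l*(t*b) := by ring
            _ = l*(l*a) := by rw [T2]
            _ = (l*l)*a := by ring
        · refine mul_right_cancel₀ hb ?_
          calc (t*t)*b = t*(t*b) := by ring
            _ = t*(l*a) := by rw [T2]
            _ = l*(t*a) := by ring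
            _ = l*(l*b) := by rw [T1]
            _ = (l*l)*b := by ring
      have ht : t = l ∨ t = -l := by
        rcases mul_self_eq_mul_self_iff.mp hsq with h' | h'
        · exact Or.inl h'
        · exact Or.inr h'
      have hμ' : μ' = μ0 + l ∨ μ' = μ0 - l := by
        rcases ht with h' | h'
        · left; rw [htdef] at h'; linarith
        · right; rw [htdef] at h'; linarith
      rcases hμ0 with rfl | rfl <;> rcases hμ' with rfl | rfl <;>
        simp [Set.mem_insert_iff] <;> ring_nf <;> norm_num
  · -- eigenvector equation
    funext x
    cases x with
    | inl c =>
      rw [bmat_mulVec_inl]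
      have hre : (Sum.elim (fun a => r * u1 a) (fun b => ε * r * u2 b) ∘ Sum.inl) = r • u1 := by
        funext d; simp [Function.comp]
      rw [hre]
      have hcr : ∑ y, (l * u1 c * u2 y) * (Sum.elim (fun a => r * u1 a)
          (fun b => ε * r * u2 b) (Sum.inr y)) = (ε * r * l) * u1 c := by
        calc ∑ y, (l * u1 c * u2 y) * (Sum.elim (fun a => r * u1 a)
              (fun b => ε * r * u2 b) (Sum.inr y))
            = ∑ y, (l * u1 c * ε * r) * (u2 y * u2 y) := by
              apply Finset.sum_congr rfl; intro y _; simp only [Sum.elim_inr]; ring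
          _ = (l * u1 c * ε * r) * ∑ y, u2 y * u2 y := by rw [← Finset.mul_sum]
          _ = (ε * r * l) * u1 c := by rw [hn2]; ring
      rw [hcr, Matrix.mulVec_smul, hu1]
      simp only [Sum.elim_inl, Pi.smul_apply, smul_eq_mul]
      ring
    | inr c =>
      rw [bmat_mulVec_inr]
      have hre : (Sum.elim (fun a => r * u1 a) (fun b => ε * r * u2 b) ∘ Sum.inr)
          = (ε * r) • u2 := by
        funext d; simp [Function.comp]
      rw [hre]
      have hcr : ∑ x, (l * u1 x * u2 c) * (Sum.elim (fun a => r * u1 a)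
          (fun b => ε * r * u2 b) (Sum.inl x)) = (r * l) * u2 c := by
        calc ∑ x, (l * u1 x * u2 c) * (Sum.elim (fun a => r * u1 a)
              (fun b => ε * r * u2 b) (Sum.inl x))
            = ∑ x, (l * u2 c * r) * (u1 x * u1 x) := by
              apply Finset.sum_congr rfl; intro x _; simp only [Sum.elim_inl]; ring
          _ = (l * u2 c * r) * ∑ x, u1 x * u1 x := by rw [← Finset.mul_sum]
          _ = (r * l) * u2 c := by rw [hn1]; ring
      rw [hcr, Matrix.mulVec_smul, hu2]
      simp only [Sum.elim_inr, Pi.smul_apply, smul_eq_mul]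
      linear_combination (-(r * l * u2 c)) * hε2
  · rintro (c|c)
    · exact mul_ne_zero sqrt2_ne (hz1 c)
    · exact mul_ne_zero (mul_ne_zero hεne sqrt2_ne) (hz2 c)
  · rw [Fintype.sum_sum_type]
    have e1 : ∀ c, (r * u1 c) * (r * u1 c) = (r*r) * (u1 c * u1 c) := fun c => by ring
    have e2 : ∀ c, (ε * r * u2 c) * (ε * r * u2 c) = (ε * ε) * ((r*r) * (u2 c * u2 c)) :=
      fun c => by ring
    simp only [Sum.elim_inl, Sum.elim_inr, e1, e2, hε2, one_mul, ← Finset.mul_sum, hn1, hn2]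
    have hr : r * r = 1/2 := sqrt2_sq
    rw [hr]
    norm_num

lemma cinv_of_iso {l μ : ℝ} {V W : Type} [Fintype V] [Fintype W]
    {G : SimpleGraph V} {H : SimpleGraph W} (e : G ≃g H) (h : CInv l G μ) : CInv l H μ := by
  classical
  obtain ⟨M, u, hs, hp, hd, he, hu, hz, hn⟩ := h
  set ee : V ≃ W := e.toEquiv with heedef
  have key : ∀ (w : W → ℝ) (c : ℝ),
      (M.submatrix ee.symm ee.symm *ᵥ w = c • w) ↔ (M *ᵥ (w ∘ ee) = c • (w ∘ ee)) := by
    intro w c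
    rw [Matrix.submatrix_mulVec_equiv M w (⇑ee.symm) ee.symm]
    constructor
    · intro h'
      funext i
      have := congrFun h' (ee i)
      simpa using this
    · intro h'
      funext i
      have := congrFun h' (ee.symm i)
      simpa using this
  refine ⟨M.submatrix ee.symm ee.symm, u ∘ ee.symm, ?_, ?_, ?_, ?_, ?_, ?_, ?_⟩
  · apply Matrix.IsSymm.ext
    intro i j
    exact hs.apply (ee.symm i) (ee.symm j)
  · intro i j hij
    rw [Matrix.submatrix_apply,
      hp _ _ (fun h' => hij (by simpa using congrArg ee h'))]
    exact e.symm.map_adj_iff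
  · intro i
    exact hd (ee.symm i)
  · intro μ' v hv hMv
    apply he μ' (v ∘ ee)
    · intro h'
      apply hv
      funext i
      have := congrFun h' (ee.symm i)
      simpa using this
    · exact (key v μ').mp hMv
  · have : (u ∘ ee.symm) ∘ ee = u := by funext i; simp
    rw [key (u ∘ ee.symm) μ, this]
    exact hu
  · intro i; exact hz (ee.symm i)
  · calc ∑ i : W, (u ∘ ee.symm) i * (u ∘ ee.symm) i
        = ∑ j : V, u j * u j := Equiv.sum_comp ee.symm (fun j => u j * u j)
      _ = 1 := hn

end LinAlg

def splitEquiv {V : Type} (A : Set V) [DecidablePred (· ∈ A)] : ↥A ⊕ ↥(Aᶜ) ≃ V where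
  toFun := Sum.elim Subtype.val Subtype.val
  invFun x := if h : x ∈ A then .inl ⟨x, h⟩ else .inr ⟨x, h⟩
  left_inv := by
    rintro (a|a)
    · simp only [Sum.elim_inl]
      exact dif_pos a.prop
    · simp only [Sum.elim_inr]
      exact dif_neg a.prop
  right_inv x := by by_cases h : x ∈ A <;> simp [h]

def decompIso {V : Type} (G : SimpleGraph V) (A : Set V) [DecidablePred (· ∈ A)] (c : Prop)
    (hc : ∀ a b, a ∈ A → b ∉ A → (G.Adj a b ↔ c)) :
    sumG (G.induce A) (G.induce Aᶜ) c ≃g G where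
  toEquiv := splitEquiv A
  map_rel_iff' := by
    rintro (a|a) (b|b)
    · show G.Adj a.val b.val ↔ _
      rw [sumG_adj_ll]
      exact Iff.rfl
    · show G.Adj a.val b.val ↔ _
      rw [sumG_adj_lr]
      exact hc a.val b.val a.prop b.prop
    · show G.Adj a.val b.val ↔ _
      rw [sumG_adj_rl, SimpleGraph.adj_comm]
      exact hc b.val a.val b.prop a.prop
    · show G.Adj a.val b.val ↔ _
      rw [sumG_adj_rr]
      exact Iff.rfl

lemma main_lemma {l : ℝ} (hl : l ≠ 0) : ∀ (n : ℕ) {V : Type} [Fintype V] (G : SimpleGraph V),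
    Fintype.card V = n → 1 ≤ n → IsEmpty (pathGraph 4 ↪g G) →
    CInv l G 0 ∧ CInv l G l := by
  intro n
  induction n using Nat.strong_induction_on with
  | _ n ih =>
    intro V _ G hcard h1 hfree
    classical
    rcases Nat.lt_or_ge n 2 with h2 | h2
    · exact inv_base G (by omega)
    · obtain ⟨A, hA, hAc, hor⟩ := decomp G (hcard ▸ h2) hfree
      haveI : Nonempty ↥A := hA.to_subtype
      haveI : Nonempty ↥(Aᶜ) := hAc.to_subtype
      have hcA : 1 ≤ Fintype.card ↥A := Fintype.card_pos
      have hcAc : 1 ≤ Fintype.card ↥(Aᶜ) := Fintype.card_pos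
      have hsum : Fintype.card ↥A + Fintype.card ↥(Aᶜ) = n := by
        rw [← hcard]
        have h' := Fintype.card_compl_set A
        have hle : Fintype.card ↥A ≤ Fintype.card V := Fintype.card_le_of_embedding
          (Function.Embedding.subtype _)
        omega
      have hfree1 : IsEmpty (pathGraph 4 ↪g G.induce A) :=
        ⟨fun f => hfree.elim ((SimpleGraph.Embedding.induce A).comp f)⟩
      have hfree2 : IsEmpty (pathGraph 4 ↪g G.induce Aᶜ) :=
        ⟨fun f => hfree.elim ((SimpleGraph.Embedding.induce Aᶜ).comp f)⟩
      obtain ⟨ha0, hal⟩ := ih (Fintype.card ↥A) (by omega) (G.induce A) rfl hcA hfree1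
      obtain ⟨hb0, hbl⟩ := ih (Fintype.card ↥(Aᶜ)) (by omega) (G.induce Aᶜ) rfl hcAc hfree2
      rcases hor with hno | hyes
      · have hc : ∀ a b, a ∈ A → b ∉ A → (G.Adj a b ↔ False) := by
          intro a b ha hb
          simp only [iff_false]
          exact hno a ha b hb
        have e := decompIso G A False hc
        exact ⟨cinv_of_iso e (inv_union ha0 hb0), cinv_of_iso e (inv_union hal hbl)⟩
      · have hc : ∀ a b, a ∈ A → b ∉ A → (G.Adj a b ↔ True) := by
          intro a b ha hb
          simp only [iff_true]
          exact hyes a ha b hb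
        have e := decompIso G A True hc
        constructor
        · have h0 := inv_join hl (Or.inr rfl) (Or.inr (rfl : (-1:ℝ) = -1)) hal hbl
          have : l + (-1) * l = 0 := by ring
          rw [this] at h0
          exact cinv_of_iso e h0
        · have h0 := inv_join hl (Or.inl rfl) (Or.inl rfl) ha0 hb0
          have : (0:ℝ) + 1 * l = l := by ring
          rw [this] at h0
          exact cinv_of_iso e h0

end CographProof

/-- A cograph is a graph with no induced subgraph isomorphic to the path `P₄`. -/
def IsCograph {V : Type*} (G : SimpleGraph V) : Prop :=
  IsEmpty (SimpleGraph.pathGraph 4 ↪g G)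

theorem cograph_exists_matrix_four_eigenvalues (n : ℕ) (G : SimpleGraph (Fin n))
    (hG : IsCograph G) (l : ℝ) (hl : l ≠ 0) :
    ∃ M : Matrix (Fin n) (Fin n) ℝ, M.IsSymm ∧
      (∀ i j, i ≠ j → (M i j ≠ 0 ↔ G.Adj i j)) ∧
      spectrum ℝ M ⊆ ({-l, 0, l, 2 * l} : Set ℝ) ∧
      ∀ i, M i i ∈ ({0, l} : Set ℝ) := by
  classical
  rcases Nat.eq_zero_or_pos n with rfl | hn
  · haveI : Subsingleton (Matrix (Fin 0) (Fin 0) ℝ) :=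
      ⟨fun a b => by ext i j; exact i.elim0⟩
    refine ⟨0, Matrix.isSymm_zero, fun i => i.elim0, ?_, fun i => i.elim0⟩
    intro μ hμ
    rw [spectrum.mem_iff] at hμ
    exact absurd (isUnit_of_subsingleton _) hμ
  · obtain ⟨h0, -⟩ := main_lemma hl n G (Fintype.card_fin n) hn hG
    obtain ⟨M, u, hs, hp, hd, he, -, -, -⟩ := h0
    refine ⟨M, hs, hp, ?_, hd⟩
    intro μ hμ
    rw [spectrum.mem_iff] at hμ
    have hdet : ((algebraMap ℝ (Matrix (Fin n) (Fin n) ℝ)) μ - M).det = 0 := by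
      by_contra h
      exact hμ ((Matrix.isUnit_iff_isUnit_det _).mpr (isUnit_iff_ne_zero.mpr h))
    obtain ⟨v, hv0, hv⟩ := (Matrix.exists_mulVec_eq_zero_iff).mpr hdet
    have heig : M *ᵥ v = μ • v := by
      rw [Matrix.sub_mulVec] at hv
      have h3 : (algebraMap ℝ (Matrix (Fin n) (Fin n) ℝ) μ) *ᵥ v = μ • v := by
        rw [Algebra.algebraMap_eq_smul_one, Matrix.smul_mulVec, Matrix.one_mulVec]
      rw [h3] at hv
      exact (sub_eq_zero.mp hv).symm
    exact he μ v hv0 heig
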